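/- Let {|k⟩} and {|x_l⟩} be two orthonormal bases of ℂ^d with overlaps c_{kl} := |⟨k|x_l⟩|², and let ρ_{AB} be a density matrix on ℂ^d ⊗ ℂ^d with marginal ρ_B. Then ∑_{k,l} c_{kl} |x_l⟩⟨x_l| ⊗ Tr_A[(|k⟩⟨k|⊗I)ρ_{AB}] ≤ ∑_l (max_k c_{kl}) |x_l⟩⟨x_l| ⊗ ρ_B in the Loewner order. -/

import Mathlib

open Matrix Kronecker ComplexOrder

private lemma conjTranspose_kron {d : ℕ} (A B : Matrix (Fin d) (Fin d) ℂ) :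
    (A ⊗ₖ B)ᴴ = Aᴴ ⊗ₖ Bᴴ := by
  ext ⟨i, j⟩ ⟨i', j'⟩
  simp [conjTranspose_apply, kroneckerMap_apply]

private lemma posSemidef_kron {d : ℕ} {A B : Matrix (Fin d) (Fin d) ℂ}
    (hA : A.PosSemidef) (hB : B.PosSemidef) : (A ⊗ₖ B).PosSemidef := by
  exact hA.kronecker hB

private lemma posSemidef_vecMulVec {d : ℕ} (v : Fin d → ℂ) :
    (Matrix.vecMulVec v (star v)).PosSemidef := by
  refine Matrix.PosSemidef.of_dotProduct_mulVec_nonneg ?_ ?_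
  · ext i j
    simp [conjTranspose_apply, vecMulVec_apply, mul_comm]
  · intro y
    have h : star y ⬝ᵥ (Matrix.vecMulVec v (star v)) *ᵥ y
        = star (star v ⬝ᵥ y) * (star v ⬝ᵥ y) := by
      simp only [dotProduct, mulVec, vecMulVec_apply, star_sum, star_mul', star_star,
        Pi.star_apply, Finset.sum_mul, Finset.mul_sum, dotProduct]
      rw [Finset.sum_comm]
      refine Finset.sum_congr rfl fun i _ => Finset.sum_congr rfl fun j _ => ?_
      ring
    rw [h]
    exact star_mul_self_nonneg _

private lemma posSemidef_smul {n : Type*} [Fintype n] {A : Matrix n n ℂ}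
    (hA : A.PosSemidef) {c : ℝ} (hc : 0 ≤ c) : ((c : ℂ) • A).PosSemidef := by
  refine Matrix.PosSemidef.of_dotProduct_mulVec_nonneg ?_ ?_
  · ext i j
    simp [conjTranspose_apply, Matrix.smul_apply, hA.1.apply]
  · intro y
    have h : star y ⬝ᵥ ((c : ℂ) • A) *ᵥ y = (c : ℂ) * (star y ⬝ᵥ A *ᵥ y) := by
      rw [smul_mulVec, dotProduct_smul, smul_eq_mul]
    rw [h]
    exact mul_nonneg (by exact_mod_cast Complex.zero_le_real.mpr hc) (hA.dotProduct_mulVec_nonneg y)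

private lemma posSemidef_sum {n : Type*} [Fintype n] {ι : Type*} (s : Finset ι)
    (f : ι → Matrix n n ℂ) (hf : ∀ i ∈ s, (f i).PosSemidef) :
    (∑ i ∈ s, f i).PosSemidef := by
  classical
  induction s using Finset.induction with
  | empty => simpa using Matrix.PosSemidef.zero
  | insert _ _ hnot ih =>
    rw [Finset.sum_insert hnot]
    exact (hf _ (Finset.mem_insert_self _ _)).add
      (ih fun i hi => hf i (Finset.mem_insert_of_mem hi))

private lemma kron_sum_right {d : ℕ} (A : Matrix (Fin d) (Fin d) ℂ)
    (B : Fin d → Matrix (Fin d) (Fin d) ℂ) :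
    A ⊗ₖ (∑ k, B k) = ∑ k, A ⊗ₖ B k := by
  ext ⟨i, j⟩ ⟨i', j'⟩
  simp [kroneckerMap_apply, Matrix.sum_apply, Finset.mul_sum]

/-- Strengthened operator bound: the twice-dephased operator
`∑_{k,l} c_{kl} |x_l⟩⟨x_l| ⊗ Tr_A[(|k⟩⟨k|⊗I)ρ_{AB}]` is bounded above, in the
Loewner order, by `∑_l (max_k c_{kl}) |x_l⟩⟨x_l| ⊗ ρ_B`. -/
theorem dephased_twice_le_columnwise (d : ℕ) (hd : 0 < d)
    (x : Fin d → (Fin d → ℂ))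
    (hx : ∀ l l', ∑ i, star (x l i) * x l' i = if l = l' then 1 else 0)
    (ckl : Fin d → Fin d → ℝ)
    (hckl : ∀ k l, ckl k l = ‖x l k‖ ^ 2)
    (m : Fin d → ℝ)
    (hm : ∀ l, IsGreatest (Set.range fun k => ckl k l) (m l))
    (ρAB : Matrix (Fin d × Fin d) (Fin d × Fin d) ℂ)
    (hρAB : ρAB.PosSemidef) (htr : ρAB.trace = 1)
    (ρB : Matrix (Fin d) (Fin d) ℂ)
    (hρB : ρB = Matrix.of fun j j' => ∑ i, ρAB (i, j) (i, j'))
    (B : Fin d → Matrix (Fin d) (Fin d) ℂ)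
    (hB : ∀ k, B k = Matrix.of fun j j' => ρAB (k, j) (k, j')) :
    (∑ l, ((m l : ℝ) : ℂ) • (Matrix.vecMulVec (x l) (star (x l)) ⊗ₖ ρB) -
      ∑ k, ∑ l, ((ckl k l : ℝ) : ℂ) •
        (Matrix.vecMulVec (x l) (star (x l)) ⊗ₖ B k)).PosSemidef := by
  have hBsum : ρB = ∑ k, B k := by
    ext j j'
    simp [hρB, hB, Matrix.sum_apply]
  have hBpsd : ∀ k, (B k).PosSemidef := by
    intro k
    have := hρAB.submatrix (fun j : Fin d => (k, j))
    convert this using 1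
    ext j j'
    simp [hB, Matrix.submatrix_apply]
  have key : (∑ l, ((m l : ℝ) : ℂ) • (Matrix.vecMulVec (x l) (star (x l)) ⊗ₖ ρB) -
      ∑ k, ∑ l, ((ckl k l : ℝ) : ℂ) •
        (Matrix.vecMulVec (x l) (star (x l)) ⊗ₖ B k)) =
      ∑ k, ∑ l, ((m l - ckl k l : ℝ) : ℂ) •
        (Matrix.vecMulVec (x l) (star (x l)) ⊗ₖ B k) := by
    rw [hBsum]
    simp only [kron_sum_right, Finset.smul_sum]
    rw [Finset.sum_comm, ← Finset.sum_sub_distrib]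
    refine Finset.sum_congr rfl fun k _ => ?_
    rw [← Finset.sum_sub_distrib]
    refine Finset.sum_congr rfl fun l _ => ?_
    rw [← sub_smul]
    push_cast
    ring_nf
  rw [key]
  apply _root_.posSemidef_sum
  intro k _
  apply _root_.posSemidef_sum
  intro l _
  refine posSemidef_smul (posSemidef_kron (posSemidef_vecMulVec _) (hBpsd k)) ?_
  have := (hm l).2 ⟨k, rfl⟩
  linarith
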